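/- Let A be a commutative ring equipped with a descending filtration by ideals (Fil^i A)_{i ∈ ℤ} such that Fil^i A = A for all i ≤ 0 and Fil^i A · Fil^j A ⊆ Fil^{i+j} A for all i, j. Let E be an A-module and V, W ⊆ E submodules with V + W = E and W generated by q' elements. For i ∈ ℤ define Fil^i E = (Fil^{i+1} A)•V + (Fil^i A)•W (so Fil^i E = E for i ≤ −1). Let q > q' be a positive integer, let Λ = ⋀^q_A E be the q-th exterior power, and for s ∈ ℤ let Fil^s Λ ⊆ Λ be the submodule generated by all wedges v₁ ∧ ⋯ ∧ v_q with v_k ∈ Fil^{i_k} E for some integers i₁, …, i_q satisfying i₁ + ⋯ + i_q = s. Then for every integer s with q' − q < s ≤ 0 one has Fil^s Λ = Σ_{j = s+q−q'}^{s+q} (Fil^j A) • Fil^{s−j} Λ. -/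

import Mathlib

open Finset Function

section Aux
variable {A : Type*} [CommRing A] {E : Type*} [AddCommGroup E] [Module A E]
  {M : Type*} [AddCommGroup M] [Module A M]

/-- Master lemma: extracting scalars from slots of a multilinear map. -/
lemma aux_master (FilA : ℤ → Ideal A) (hA0 : FilA 0 = ⊤)
    (hA_mul : ∀ i j : ℤ, FilA i * FilA j ≤ FilA (i + j))
    {q : ℕ} (f : MultilinearMap A (fun _ : Fin q => E) M)
    (N : Fin q → Submodule A E) (g : Fin q → ℤ) (T : Finset (Fin q)) :
    ∀ v : Fin q → E, (∀ k ∈ T, v k ∈ FilA (g k) • N k) →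
      f v ∈ FilA (∑ k ∈ T, g k) • Submodule.span A
        {z : M | ∃ u : Fin q → E, (∀ k ∈ T, u k ∈ N k) ∧ (∀ k ∉ T, u k = v k) ∧ z = f u} := by
  classical
  induction T using Finset.induction_on with
  | empty =>
    intro v hv
    rw [Finset.sum_empty, hA0, Submodule.top_smul]
    exact Submodule.subset_span ⟨v, by simp⟩
  | @insert a T' ha ih =>
    intro v hv
    have hva : v a ∈ FilA (g a) • N a := hv a (Finset.mem_insert_self a T')
    have h1 := ih v (fun k hk => hv k (Finset.mem_insert_of_mem hk))
    set S : Set M := {z | ∃ u : Fin q → E, (∀ k ∈ insert a T', u k ∈ N k) ∧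
      (∀ k ∉ insert a T', u k = v k) ∧ z = f u} with hS
    have hspan : Submodule.span A
        {z : M | ∃ u : Fin q → E, (∀ k ∈ T', u k ∈ N k) ∧ (∀ k ∉ T', u k = v k) ∧ z = f u}
        ≤ FilA (g a) • Submodule.span A S := by
      rw [Submodule.span_le]
      rintro _ ⟨u, hu1, hu2, rfl⟩
      have hua : u a = v a := hu2 a ha
      have hfu : f u = (f.toLinearMap u a) (v a) := by
        rw [MultilinearMap.toLinearMap_apply, ← hua, Function.update_eq_self]
      have hmap : Submodule.map (f.toLinearMap u a) (N a) ≤ Submodule.span A S := by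
        rw [Submodule.map_le_iff_le_comap]
        intro n hn
        simp only [Submodule.mem_comap, MultilinearMap.toLinearMap_apply]
        refine Submodule.subset_span ⟨Function.update u a n, ?_, ?_, rfl⟩
        · intro k hk
          rcases Finset.mem_insert.mp hk with rfl | hk'
          · rwa [Function.update_self]
          · rw [Function.update_of_ne (by rintro rfl; exact ha hk')]
            exact hu1 k hk'
        · intro k hk
          have hka : k ≠ a := fun h => hk (h ▸ Finset.mem_insert_self a T')
          rw [Function.update_of_ne hka]
          exact hu2 k (fun h => hk (Finset.mem_insert_of_mem h))
      have h2 : (f.toLinearMap u a) (v a) ∈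
          FilA (g a) • Submodule.map (f.toLinearMap u a) (N a) := by
        rw [← Submodule.map_smul'']
        exact Submodule.mem_map_of_mem hva
      rw [SetLike.mem_coe, hfu]
      exact smul_mono_right _ (hmap) h2
    have h3 : f v ∈ FilA (∑ k ∈ T', g k) • (FilA (g a) • Submodule.span A S) :=
      smul_mono_right _ hspan h1
    rw [← Submodule.smul_assoc, Ideal.smul_eq_mul] at h3
    refine Submodule.smul_mono_left ?_ h3
    refine le_trans (hA_mul _ _) (le_of_eq (congrArg FilA ?_))
    rw [Finset.sum_insert ha]; ring

/-- Vanishing lemma: an alternating map vanishes when the entries on a set of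
more than `q'` slots all lie in the span of `q'` vectors. -/
lemma aux_vanish {q q' : ℕ} (f : E [⋀^Fin q]→ₗ[A] M) (w : Fin q' → E)
    (T₀ : Finset (Fin q)) (hcard : q' < T₀.card) :
    ∀ (T : Finset (Fin q)) (u : Fin q → E),
      (∀ k ∈ T, u k ∈ Submodule.span A (Set.range w)) →
      (∀ k ∈ T₀ \ T, ∃ m, u k = w m) → f u = 0 := by
  classical
  intro T
  induction T using Finset.induction_on with
  | empty =>
    intro u _ h2
    simp only [Finset.sdiff_empty] at h2
    rcases Nat.eq_zero_or_pos q' with rfl | hq'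
    · obtain ⟨k, hk⟩ := Finset.card_pos.mp (Nat.zero_lt_of_lt hcard)
      obtain ⟨m, _⟩ := h2 k hk
      exact m.elim0
    · have hch : ∀ k : Fin q, ∃ m : Fin q', k ∈ T₀ → u k = w m := by
        intro k
        by_cases hk : k ∈ T₀
        · obtain ⟨m, hm⟩ := h2 k hk
          exact ⟨m, fun _ => hm⟩
        · exact ⟨⟨0, hq'⟩, fun h => absurd h hk⟩
      choose φ hφ using hch
      obtain ⟨x, hx, y, hy, hxy, hfxy⟩ :=
        Finset.exists_ne_map_eq_of_card_lt_of_maps_to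
          (by simpa using hcard) (fun k (_ : k ∈ T₀) => Finset.mem_univ (φ k))
      exact f.map_eq_zero_of_eq u (by rw [hφ x hx, hφ y hy, hfxy]) hxy
  | @insert a T' ha ih =>
    intro u h1 h2
    have hmem : u a ∈ Submodule.span A (Set.range w) :=
      h1 a (Finset.mem_insert_self a T')
    have key : ∀ x ∈ Submodule.span A (Set.range w), f (Function.update u a x) = 0 := by
      intro x hx
      induction hx using Submodule.span_induction with
      | mem x hxw =>
        obtain ⟨m, rfl⟩ := hxw
        refine ih (Function.update u a (w m)) ?_ ?_
        · intro k hk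
          rw [Function.update_of_ne (by rintro rfl; exact ha hk)]
          exact h1 k (Finset.mem_insert_of_mem hk)
        · intro k hk
          rcases Finset.mem_sdiff.mp hk with ⟨hk0, hk1⟩
          by_cases hka : k = a
          · subst hka; exact ⟨m, Function.update_self _ _ _⟩
          · rw [Function.update_of_ne hka]
            exact h2 k (Finset.mem_sdiff.mpr ⟨hk0, fun h =>
              hk1 (Finset.mem_of_mem_insert_of_ne h hka)⟩)
      | zero => exact f.map_update_zero u a
      | add x y _ _ hx' hy' => rw [f.map_update_add, hx', hy', add_zero]
      | smul c x _ hx' => rw [f.map_update_smul, hx', smul_zero]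
    have := key (u a) hmem
    rwa [Function.update_eq_self] at this

end Aux


open Finset in
/-- Proposition 5.16 of the paper.  `A` is a commutative ring with a descending
multiplicative `ℤ`-indexed filtration by ideals `FilA` with `FilA i = A` for
`i ≤ 0`.  `E` is an `A`-module with submodules `V`, `W` such that `V + W = E` and
`W` is generated by `q'` elements; `Fil^i E = Fil^{i+1}A • V + Fil^i A • W`.
On `Λ = ⋀^q E` (with `q > q'`), `Fil^s Λ` is the submodule generated by wedges
`v₁ ∧ ⋯ ∧ v_q` with `v_k ∈ Fil^{i_k} E` and `Σ i_k = s`.  Then for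
`q' − q < s ≤ 0`:
`Fil^s Λ = Σ_{j = s+q−q'}^{s+q} (Fil^j A) • Fil^{s−j} Λ`. -/
theorem filtration_exterior_power_scalar_generation
    (A : Type*) [CommRing A] (FilA : ℤ → Ideal A)
    (hA_anti : ∀ i j : ℤ, i ≤ j → FilA j ≤ FilA i)
    (hA_neg : ∀ i : ℤ, i ≤ 0 → FilA i = ⊤)
    (hA_mul : ∀ i j : ℤ, FilA i * FilA j ≤ FilA (i + j))
    (E : Type*) [AddCommGroup E] [Module A E]
    (V W : Submodule A E) (hVW : V ⊔ W = ⊤)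
    (q' : ℕ) (w : Fin q' → E) (hW : W = Submodule.span A (Set.range w))
    (q : ℕ) (hq : q' < q) (hq0 : 0 < q)
    (FilE : ℤ → Submodule A E)
    (hFilE : ∀ i : ℤ, FilE i = FilA (i + 1) • V ⊔ FilA i • W)
    (FilΛ : ℤ → Submodule A (⋀[A]^q E))
    (hFilΛ : ∀ s : ℤ, FilΛ s = Submodule.span A
      { z : ⋀[A]^q E | ∃ (ind : Fin q → ℤ) (v : Fin q → E),
          (∑ k, ind k) = s ∧ (∀ k, v k ∈ FilE (ind k)) ∧
          (z : ExteriorAlgebra A E) = ExteriorAlgebra.ιMulti A q v })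
    (s : ℤ) (hs1 : (q' : ℤ) - (q : ℤ) < s) (hs2 : s ≤ 0) :
    FilΛ s = ⨆ j ∈ Finset.Icc (s + (q : ℤ) - (q' : ℤ)) (s + (q : ℤ)),
      FilA j • FilΛ (s - j) := by
  classical
  set fP : E [⋀^Fin q]→ₗ[A] (⋀[A]^q E) :=
    (ExteriorAlgebra.ιMulti A q).codRestrict (⋀[A]^q E)
      (fun v => ExteriorAlgebra.ιMulti_range A q (Set.mem_range_self v)) with hfP
  have hfPcoe : ∀ v : Fin q → E, ((fP v : ⋀[A]^q E) : ExteriorAlgebra A E)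
      = ExteriorAlgebra.ιMulti A q v := fun v => rfl
  have hsmulE : ∀ (j i : ℤ), FilA j • FilE i ≤ FilE (i + j) := by
    intro j i
    rw [hFilE i, hFilE (i + j), Submodule.smul_sup, ← Submodule.smul_assoc,
      ← Submodule.smul_assoc, Ideal.smul_eq_mul, Ideal.smul_eq_mul]
    apply sup_le_sup
    · exact Submodule.smul_mono_left
        (le_trans (hA_mul j (i + 1)) (le_of_eq (congrArg FilA (by ring))))
    · exact Submodule.smul_mono_left
        (le_trans (hA_mul j i) (le_of_eq (congrArg FilA (by ring))))
  have hFilEtop : ∀ i : ℤ, i ≤ -1 → FilE i = ⊤ := by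
    intro i hi
    rw [hFilE i, hA_neg (i + 1) (by omega), hA_neg i (by omega),
      Submodule.top_smul, Submodule.top_smul, hVW]
  have hW0 : W ≤ FilE 0 := by
    rw [hFilE 0]
    exact le_sup_of_le_right (by rw [hA_neg 0 le_rfl, Submodule.top_smul])
  apply le_antisymm
  · -- hard direction
    rw [hFilΛ s, Submodule.span_le]
    rintro z ⟨ind, v, hsum, hmem, hcoe⟩
    simp only [SetLike.mem_coe]
    have hz : z = fP v := Subtype.ext (by rw [hcoe, hfPcoe])
    have hdec : ∀ k, ∃ p ∈ FilA (ind k + 1) • V, ∃ r ∈ FilA (ind k) • W, p + r = v k := by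
      intro k
      have h := hmem k
      rw [hFilE (ind k)] at h
      exact Submodule.mem_sup.mp h
    choose p hp r hr hpr using hdec
    have hv : v = p + r := funext fun k => (hpr k).symm
    rw [hz, hv, show (fP (p + r) : ⋀[A]^q E)
        = ∑ S : Finset (Fin q), fP (S.piecewise p r) from
      MultilinearMap.map_add_univ fP.toMultilinearMap p r]
    apply Submodule.sum_mem
    intro S _
    by_cases hcard : q' < (Sᶜ).card
    · -- more than q' entries in W : the wedge vanishes
      have hzero : fP (S.piecewise p r) = 0 := by
        apply aux_vanish fP w Sᶜ hcard Sᶜ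
        · intro k hk
          rw [Finset.piecewise_eq_of_notMem _ _ _ (Finset.mem_compl.mp hk)]
          have : r k ∈ W := Submodule.smul_le_right (hr k)
          rwa [hW] at this
        · intro k hk
          rw [Finset.sdiff_self] at hk
          exact absurd hk (Finset.notMem_empty k)
      rw [hzero]
      exact Submodule.zero_mem _
    · push_neg at hcard
      have hScard : (Sᶜ).card = q - S.card := by
        rw [Finset.card_compl, Fintype.card_fin]
      have hSq : S.card ≤ q := by
        simpa using Finset.card_le_univ S
      have hmm := aux_master FilA (hA_neg 0 le_rfl) hA_mul fP.toMultilinearMap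
        (fun k => if k ∈ S then V else W) (fun k => if k ∈ S then ind k + 1 else ind k)
        Finset.univ (S.piecewise p r) ?_
      swap
      · intro k _
        by_cases hk : k ∈ S
        · rw [Finset.piecewise_eq_of_mem _ _ _ hk]
          simp only [if_pos hk]
          exact hp k
        · rw [Finset.piecewise_eq_of_notMem _ _ _ hk]
          simp only [if_neg hk]
          exact hr k
      have hgsum : (∑ k, (if k ∈ S then ind k + 1 else ind k)) = s + (S.card : ℤ) := by
        have h1 : ∑ k ∈ S, (if k ∈ S then ind k + 1 else ind k) = ∑ k ∈ S, (ind k + 1) :=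
          Finset.sum_congr rfl (fun k hk => by rw [if_pos hk])
        have h2 : ∑ k ∈ Sᶜ, (if k ∈ S then ind k + 1 else ind k) = ∑ k ∈ Sᶜ, ind k :=
          Finset.sum_congr rfl (fun k hk => by rw [if_neg (Finset.mem_compl.mp hk)])
        have h3 : (∑ k ∈ S, ind k) + (∑ k ∈ Sᶜ, ind k) = s := by
          rw [Finset.sum_add_sum_compl]; exact hsum
        rw [← Finset.sum_add_sum_compl S, h1, h2, Finset.sum_add_distrib,
          Finset.sum_const, nsmul_eq_mul, mul_one]
        omega
      rw [hgsum] at hmm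
      have hPle : Submodule.span A {z : ⋀[A]^q E | ∃ u : Fin q → E,
          (∀ k ∈ Finset.univ, u k ∈ (if k ∈ S then V else W)) ∧
          (∀ k ∉ Finset.univ, u k = S.piecewise p r k) ∧ z = fP.toMultilinearMap u}
          ≤ FilΛ (s - (s + (S.card : ℤ))) := by
        rw [Submodule.span_le]
        rintro _ ⟨u, hu1, -, rfl⟩
        simp only [SetLike.mem_coe]
        rw [hFilΛ]
        apply Submodule.subset_span
        refine ⟨fun k => if k ∈ S then (-1 : ℤ) else 0, u, ?_, ?_, hfPcoe u⟩
        · rw [Finset.sum_ite_mem, Finset.univ_inter, Finset.sum_const, nsmul_eq_mul]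
          push_cast
          ring
        · intro k
          show u k ∈ FilE (if k ∈ S then (-1 : ℤ) else 0)
          by_cases hk : k ∈ S
          · rw [if_pos hk, hFilEtop (-1) le_rfl]
            exact Submodule.mem_top
          · rw [if_neg hk]
            have := hu1 k (Finset.mem_univ k)
            rw [if_neg hk] at this
            exact hW0 this
      have hmm2 : fP (S.piecewise p r)
          ∈ FilA (s + (S.card : ℤ)) • FilΛ (s - (s + (S.card : ℤ))) :=
        smul_mono_right _ hPle hmm
      have hjmem : (s + (S.card : ℤ)) ∈
          Finset.Icc (s + (q : ℤ) - (q' : ℤ)) (s + (q : ℤ)) := by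
        rw [Finset.mem_Icc]
        constructor <;> omega
      exact Submodule.mem_iSup_of_mem (s + (S.card : ℤ)) (Submodule.mem_iSup_of_mem hjmem hmm2)
  · refine iSup₂_le fun j hj => ?_
    rw [Submodule.smul_le]
    intro a ha n hn
    rw [hFilΛ (s - j)] at hn
    have hcom : Submodule.span A
        { z : ⋀[A]^q E | ∃ (ind : Fin q → ℤ) (v : Fin q → E),
          (∑ k, ind k) = s - j ∧ (∀ k, v k ∈ FilE (ind k)) ∧
          (z : ExteriorAlgebra A E) = ExteriorAlgebra.ιMulti A q v }
        ≤ Submodule.comap (LinearMap.lsmul A (⋀[A]^q E) a) (FilΛ s) := by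
      rw [Submodule.span_le]
      rintro z ⟨ind, v, hsum, hmem, hcoe⟩
      simp only [SetLike.mem_coe, Submodule.mem_comap, LinearMap.lsmul_apply]
      rw [hFilΛ s]
      apply Submodule.subset_span
      set k0 : Fin q := ⟨0, hq0⟩
      refine ⟨Function.update ind k0 (ind k0 + j), Function.update v k0 (a • v k0),
        ?_, ?_, ?_⟩
      · rw [Finset.sum_update_of_mem (Finset.mem_univ k0)]
        have h4 : ∑ x ∈ Finset.univ \ {k0}, ind x = (∑ k, ind k) - ind k0 := by
          rw [Finset.sum_sdiff_eq_sub (Finset.subset_univ {k0}), Finset.sum_singleton]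
        rw [h4, hsum]
        ring
      · intro k
        by_cases hk : k = k0
        · rw [hk, Function.update_self, Function.update_self]
          exact hsmulE j (ind k0) (Submodule.smul_mem_smul ha (hmem k0))
        · rw [Function.update_of_ne hk, Function.update_of_ne hk]
          exact hmem k
      · rw [Submodule.coe_smul, hcoe]
        have h5 := (ExteriorAlgebra.ιMulti A q).map_update_smul v k0 a (v k0)
        rw [Function.update_eq_self] at h5
        exact h5.symm
    exact hcom hn
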